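/- Let P = (P_1,...,P_n) be sites in a metric space with ε := min_{i≠j} dist(P_i,P_j) > 0, and suppose R = Dom S and S = Dom R. Then for each i, dist(P_i, ∪_{j≠i} S_j) ≥ ε/2, and consequently the ε/4-neighborhood of P_i is contained in R_i. -/

import Mathlib

open EMetric Set

/-- The dominance region of `A` over `B`. -/
def dom {X : Type*} [MetricSpace X] (A B : Set X) : Set X :=
  {x | infEdist x A ≤ infEdist x B}

/-- The operator `Dom` relative to the tuple of sites `P`. -/
def Dom {X : Type*} [MetricSpace X] {n : ℕ} (P R : Fin n → Set X) : Fin n → Set X :=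
  fun i => dom (P i) (⋃ j, ⋃ (_ : j ≠ i), R j)

/-- If the sites are pairwise at distance at least `ε > 0` and `R = Dom S`, `S = Dom R`,
then each `P i` is at distance at least `ε/2` from `⋃_{j ≠ i} S j`, and the
`ε/4`-neighborhood of `P i` is contained in `R i`. -/
theorem eps_quarter_ball {X : Type*} [MetricSpace X] {n : ℕ}
    (P R S : Fin n → Set X) (hP : ∀ i, (P i).Nonempty)
    (ε : ℝ) (hε : 0 < ε)
    (hsep : ∀ i j, i ≠ j → ∀ p ∈ P i, ∀ q ∈ P j, ε ≤ dist p q)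
    (hR : R = Dom P S) (hS : S = Dom P R) :
    (∀ i, ∀ p ∈ P i, ∀ x ∈ ⋃ j, ⋃ (_ : j ≠ i), S j, ε / 2 ≤ dist p x) ∧
    (∀ i, ∀ x : X, infEdist x (P i) ≤ ENNReal.ofReal (ε / 4) → x ∈ R i) := by
  -- Each site is contained in its own dominance region.
  have hPR : ∀ i, P i ⊆ R i := by
    intro i p hp
    rw [hR]
    show infEdist p (P i) ≤ _
    unfold EMetric.infEdist
    simp [Metric.infEDist_zero_of_mem hp]
  -- Part 1.
  have claim1 : ∀ i, ∀ p ∈ P i, ∀ x ∈ ⋃ j, ⋃ (_ : j ≠ i), S j, ε / 2 ≤ dist p x := by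
    intro i p hp x hx
    obtain ⟨j, hj, hxS⟩ := mem_iUnion₂.1 hx
    rw [hS] at hxS
    have h1 : infEdist x (P j) ≤ infEdist x (⋃ k, ⋃ (_ : k ≠ j), R k) := hxS
    have hpR : p ∈ ⋃ k, ⋃ (_ : k ≠ j), R k :=
      mem_iUnion₂.2 ⟨i, fun h => hj h.symm, hPR i hp⟩
    have h2 : infEdist x (⋃ k, ⋃ (_ : k ≠ j), R k) ≤ edist x p :=
      infEdist_le_edist_of_mem hpR
    have h3 : ENNReal.ofReal (ε - dist p x) ≤ infEdist x (P j) := by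
      unfold EMetric.infEdist
      rw [Metric.le_infEDist]
      intro q hq
      rw [edist_dist]
      apply ENNReal.ofReal_le_ofReal
      have hsep' := hsep i j (fun h => hj h.symm) p hp q hq
      have htri := dist_triangle p x q
      linarith
    have h4 : ENNReal.ofReal (ε - dist p x) ≤ ENNReal.ofReal (dist x p) := by
      calc ENNReal.ofReal (ε - dist p x) ≤ infEdist x (P j) := h3
        _ ≤ edist x p := h1.trans h2
        _ = ENNReal.ofReal (dist x p) := edist_dist x p
    have h5 : ε - dist p x ≤ dist x p :=
      (ENNReal.ofReal_le_ofReal_iff dist_nonneg).1 h4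
    rw [dist_comm x p] at h5
    linarith
  refine ⟨claim1, ?_⟩
  -- Part 2.
  intro i x hx
  rw [hR]
  show infEdist x (P i) ≤ infEdist x (⋃ j, ⋃ (_ : j ≠ i), S j)
  refine hx.trans ?_
  unfold EMetric.infEdist
  rw [Metric.le_infEDist]
  intro y hy
  rw [edist_dist]
  apply ENNReal.ofReal_le_ofReal
  -- for every p ∈ P i, ε/2 ≤ dist p y ≤ dist p x + dist x y
  have h6 : ENNReal.ofReal (ε / 2 - dist x y) ≤ infEdist x (P i) := by
    unfold EMetric.infEdist
    rw [Metric.le_infEDist]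
    intro p hp
    rw [edist_dist]
    apply ENNReal.ofReal_le_ofReal
    have := claim1 i p hp y hy
    have htri := dist_triangle p x y
    rw [dist_comm x p]
    linarith
  have h7 : ENNReal.ofReal (ε / 2 - dist x y) ≤ ENNReal.ofReal (ε / 4) := h6.trans hx
  have h8 : ε / 2 - dist x y ≤ ε / 4 :=
    (ENNReal.ofReal_le_ofReal_iff (by linarith)).1 h7
  linarith
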